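/- Let S be a countably based Cu-semigroup satisfying O5, O6 and O7, and let w ∈ S be an idempotent. Then the map x ↦ x ∧ w is a monoid homomorphism S → S preserving the order and suprema of increasing sequences. -/
import Mathlib


open scoped ENNReal

namespace CuFormal

variable {S : Type*} [AddCommMonoid S] [PartialOrder S]

/-- The algebra-free way-below relation: `x ≪ y` iff whenever `y ≤ sup yₙ` for an
increasing sequence with supremum, then `x ≤ yₙ` for some `n`. -/
def WayBelow (x y : S) : Prop :=
  ∀ f : ℕ → S, Monotone f → ∀ s : S, IsLUB (Set.range f) s → y ≤ s → ∃ n, x ≤ f n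

/-- Positively ordered monoid with addition monotone. -/
def PosOrdered : Prop :=
  (∀ x : S, (0 : S) ≤ x) ∧ ∀ a b c : S, b ≤ c → a + b ≤ a + c

/-- O1: every increasing sequence has a supremum. -/
def AxO1 : Prop := ∀ f : ℕ → S, Monotone f → ∃ s : S, IsLUB (Set.range f) s

/-- O2: every element is the supremum of a ≪-increasing sequence. -/
def AxO2 : Prop := ∀ x : S, ∃ f : ℕ → S, Monotone f ∧
  (∀ n, WayBelow (f n) (f (n + 1))) ∧ IsLUB (Set.range f) x

/-- O3 -/
def AxO3 : Prop := ∀ x₁ y₁ x₂ y₂ : S,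
  WayBelow x₁ y₁ → WayBelow x₂ y₂ → WayBelow (x₁ + x₂) (y₁ + y₂)

/-- O4 -/
def AxO4 : Prop := ∀ f g : ℕ → S, Monotone f → Monotone g →
  ∀ a b : S, IsLUB (Set.range f) a → IsLUB (Set.range g) b →
    IsLUB (Set.range fun n => f n + g n) (a + b)

/-- A Cu-semigroup: positively ordered monoid satisfying O1–O4. -/
def CuSemigroup : Prop :=
  PosOrdered (S := S) ∧ AxO1 (S := S) ∧ AxO2 (S := S) ∧ AxO3 (S := S) ∧ AxO4 (S := S)

/-- O5 -/
def AxO5 : Prop := ∀ x' x y w' w : S, WayBelow x' x → x ≤ y → WayBelow w' w →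
  x + w ≤ y → ∃ z : S, x' + z ≤ y ∧ y ≤ x + z ∧ WayBelow w' z

/-- O6 -/
def AxO6 : Prop := ∀ x' x y z : S, WayBelow x' x → x ≤ y + z →
  ∃ y' z' : S, x' ≤ y' + z' ∧ y' ≤ x ∧ y' ≤ y ∧ z' ≤ x ∧ z' ≤ z

/-- O7 -/
def AxO7 : Prop := ∀ x₁' x₁ x₂' x₂ w : S,
  WayBelow x₁' x₁ → x₁ ≤ w → WayBelow x₂' x₂ → x₂ ≤ w →
  ∃ x : S, WayBelow x₁' x ∧ WayBelow x₂' x ∧ x ≤ w ∧ x ≤ x₁ + x₂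

/-- An ideal: a downward hereditary subsemigroup closed under suprema of increasing
sequences. -/
def IsIdeal (J : Set S) : Prop :=
  (0 : S) ∈ J ∧ (∀ x y : S, x ∈ J → y ∈ J → x + y ∈ J) ∧
  (∀ x y : S, y ∈ J → x ≤ y → x ∈ J) ∧
  (∀ f : ℕ → S, Monotone f → (∀ n, f n ∈ J) →
    ∀ s : S, IsLUB (Set.range f) s → s ∈ J)

/-- Countably based. -/
def CountablyBased : Prop := ∃ B : Set S, B.Countable ∧
  ∀ x : S, ∃ f : ℕ → S, (∀ n, f n ∈ B) ∧ Monotone f ∧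
    (∀ n, WayBelow (f n) (f (n + 1))) ∧ IsLUB (Set.range f) x

/-- A functional on `S`: preserves `0`, addition, order and suprema of increasing
sequences. -/
def IsFunctional (l : S → ℝ≥0∞) : Prop :=
  l 0 = 0 ∧ (∀ x y : S, l (x + y) = l x + l y) ∧ Monotone l ∧
  (∀ f : ℕ → S, Monotone f → ∀ s : S, IsLUB (Set.range f) s → l s = ⨆ n, l (f n))

/-- `(x̂ ∧ ŷ)(λ) = inf { λ₁(x) + λ₂(y) : λ = λ₁ + λ₂ }`. -/
noncomputable def hatInf (x y : S) (l : S → ℝ≥0∞) : ℝ≥0∞ :=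
  sInf {t : ℝ≥0∞ | ∃ l₁ l₂ : S → ℝ≥0∞, IsFunctional l₁ ∧ IsFunctional l₂ ∧
    (∀ u : S, l u = l₁ u + l₂ u) ∧ t = l₁ x + l₂ y}

/-- Edwards' condition for the functional `l`. -/
def EdwardsFor (l : S → ℝ≥0∞) : Prop := ∀ x y : S,
  hatInf x y l = sSup {t : ℝ≥0∞ | ∃ z : S, z ≤ x ∧ z ≤ y ∧ t = l z}

/-- The ideal generated by a subset. -/
def idealGen (X : Set S) : Set S := ⋂₀ {J : Set S | IsIdeal J ∧ X ⊆ J}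


/-- the map `x ↦ x ∧ w` (for an idempotent `w`) is an additive,
order-preserving, supremum-preserving monoid homomorphism. -/
theorem stmt9 {S : Type*} [AddCommMonoid S] [PartialOrder S]
    (hCu : CuSemigroup (S := S)) (hcb : CountablyBased (S := S))
    (hO5 : AxO5 (S := S)) (hO6 : AxO6 (S := S)) (hO7 : AxO7 (S := S))
    (w : S) (hw : w + w = w)
    (m : S → S) (hm : ∀ x : S, IsGLB {x, w} (m x)) :
    m 0 = 0 ∧ (∀ x y : S, m (x + y) = m x + m y) ∧ Monotone m ∧
      (∀ f : ℕ → S, Monotone f → ∀ s : S, IsLUB (Set.range f) s →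
        IsLUB (Set.range fun n => m (f n)) (m s)) := by

  obtain ⟨⟨hpos, haddmono⟩, hO1, hO2, hO3, hO4⟩ := hCu
  have hadd : ∀ a b c d : S, a ≤ b → c ≤ d → a + c ≤ b + d := by
    intro a b c d hab hcd
    calc a + c ≤ a + d := haddmono a c d hcd
      _ = d + a := add_comm _ _
      _ ≤ d + b := haddmono d a b hab
      _ = b + d := add_comm _ _
  have hml : ∀ x : S, m x ≤ x := fun x => (hm x).1 (Set.mem_insert _ _)
  have hmw : ∀ x : S, m x ≤ w := fun x => (hm x).1 (Set.mem_insert_of_mem _ rfl)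
  have hglb : ∀ x z : S, z ≤ x → z ≤ w → z ≤ m x := by
    intro x z h1 h2
    apply (hm x).2
    rintro t (rfl | ht)
    · exact h1
    · rw [Set.mem_singleton_iff] at ht; subst ht; exact h2
  have hmono : Monotone m := by
    intro x y hxy
    exact hglb y (m x) ((hml x).trans hxy) (hmw x)
  refine ⟨le_antisymm (hml 0) (hglb 0 0 le_rfl (hpos w)), ?_, hmono, ?_⟩
  · intro x y
    have le1 : m x + m y ≤ m (x + y) := by
      refine hglb _ _ (hadd _ _ _ _ (hml x) (hml y)) ?_
      have := hadd _ _ _ _ (hmw x) (hmw y)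
      rwa [hw] at this
    have le2 : m (x + y) ≤ m x + m y := by
      obtain ⟨g, gmono, gwb, glub⟩ := hO2 (m (x + y))
      refine glub.2 ?_
      rintro t ⟨n, rfl⟩
      have hg1 : g (n + 1) ≤ m (x + y) := glub.1 ⟨n + 1, rfl⟩
      obtain ⟨y', z', h1, h2, h3, h4, h5⟩ :=
        hO6 (g n) (g (n + 1)) x y (gwb n) (hg1.trans (hml _))
      have hy'w : y' ≤ w := h2.trans (hg1.trans (hmw _))
      have hz'w : z' ≤ w := h4.trans (hg1.trans (hmw _))
      exact h1.trans (hadd _ _ _ _ (hglb x y' h3 hy'w) (hglb y z' h5 hz'w))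
    exact le_antisymm le2 le1
  · intro f hf s hs
    constructor
    · rintro t ⟨n, rfl⟩
      exact hmono (hs.1 ⟨n, rfl⟩)
    · intro u hu
      obtain ⟨g, gmono, gwb, glub⟩ := hO2 (m s)
      refine glub.2 ?_
      rintro t ⟨n, rfl⟩
      have hg1 : g (n + 1) ≤ m s := glub.1 ⟨n + 1, rfl⟩
      obtain ⟨k, hk⟩ := gwb n f hf s hs (hg1.trans (hml s))
      have hgn : g n ≤ m s := glub.1 ⟨n, rfl⟩
      have : g n ≤ m (f k) := hglb (f k) (g n) hk (hgn.trans (hmw s))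
      exact this.trans (hu ⟨k, rfl⟩)


end CuFormal
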